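/- arXiv:2501.10735 — 4 statements merged into one kernel-verified Lean document; each statement's English description precedes it below -/
import Mathlib

section
/- If X and Y are objects of B^split, then X ⊗ Y is again an object of B^split; that is, the splitting subcategory B^split is closed under tensor products and is therefore a monoidal subcategory of B. -/
open CategoryTheory CategoryTheory.Limits CategoryTheory.MonoidalCategory

universe v u

variable {B : Type u} [CategoryTheory.Category.{v} B]

/-- The splitting subcategory `B^split` determined by a class `P` of objects of `B`
(the objects of the full subcategory `C`): an object lies in `B^split` iff it admits
a finite chain of subobjects `0 = X₀ ≤ X₁ ≤ … ≤ X_m = X` in which every subquotient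
`X_k/X_{k−1}` is a simple object belonging to `C`.  Equivalently (and this is the
inductive formulation used here), the class of such objects is the smallest class
containing the zero objects and closed under extensions (short exact sequences)
whose quotient term is a simple object of `C`. -/
inductive IsSplitObj [CategoryTheory.Abelian B] (P : B → Prop) : B → Prop
  | of_isZero (X : B) (h : IsZero X) : IsSplitObj P X
  | of_extension (S : CategoryTheory.ShortComplex B) (hS : S.ShortExact)
      (h₁ : IsSplitObj P S.X₁) (h₃ : CategoryTheory.Simple S.X₃) (hP : P S.X₃) :
      IsSplitObj P S.X₂

section Aux

variable [CategoryTheory.Abelian B] {P : B → Prop}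

theorem IsSplitObj.of_iso {X Y : B} (e : X ≅ Y) (hX : IsSplitObj P X) :
    IsSplitObj P Y := by
  induction hX generalizing Y with
  | of_isZero X h => exact .of_isZero Y (h.of_iso e.symm)
  | of_extension S hS h₁ h₃ hP ih =>
    have w : (S.f ≫ e.hom) ≫ (e.inv ≫ S.g) = 0 := by
      rw [Category.assoc, Iso.hom_inv_id_assoc, S.zero]
    have hS' : (ShortComplex.mk (S.f ≫ e.hom) (e.inv ≫ S.g) w).ShortExact :=
      ShortComplex.shortExact_of_iso
        ((ShortComplex.isoMk (Iso.refl S.X₁) e (Iso.refl S.X₃) (by simp) (by simp) :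
          S ≅ ShortComplex.mk (S.f ≫ e.hom) (e.inv ≫ S.g) w)) hS
    exact .of_extension _ hS' h₁ h₃ hP

theorem IsSplitObj.of_epi
    (hquot : ∀ {X Y : B} (f : X ⟶ Y), Epi f → P X → P Y)
    {X : B} (hX : IsSplitObj P X) :
    ∀ (Q : B) (p : X ⟶ Q), Epi p → IsSplitObj P Q := by
  induction hX with
  | of_isZero X h =>
    intro Q p hp
    refine .of_isZero Q (IsZero.of_iso (isZero_zero B) ?_)
    have hp0 : p = 0 := h.eq_of_src p 0
    refine ⟨0, 0, ?_, ?_⟩ <;> simp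
    · -- 𝟙 Q = 0
      rw [← cancel_epi p, hp0]; simp
  | of_extension S hS h₁ h₃ hP ih =>
    intro Q p hp
    haveI := hS.mono_f
    haveI := hS.epi_g
    haveI := hp
    set q : Q ⟶ cokernel (S.f ≫ p) := cokernel.π (S.f ≫ p) with hq
    have hfpq : S.f ≫ p ≫ q = 0 := by rw [← Category.assoc]; exact cokernel.condition _
    set t : S.X₃ ⟶ cokernel (S.f ≫ p) := hS.exact.desc (p ≫ q) hfpq with ht
    have hgt : S.g ≫ t = p ≫ q := hS.exact.g_desc _ _
    by_cases ht0 : t = 0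
    · -- then q = 0, so f ≫ p is epi and Q is a quotient of X₁
      have hq0 : q = 0 := by
        rw [← cancel_epi p, ← hgt, ht0, comp_zero, comp_zero]
      exact ih Q (S.f ≫ p) (CategoryTheory.Abelian.epi_of_cokernel_π_eq_zero _ hq0)
    · have htepi : Epi t := by
        have : Epi (S.g ≫ t) := by rw [hgt]; infer_instance
        exact epi_of_epi S.g t
      haveI := htepi
      have htiso : IsIso t := isIso_of_epi_of_nonzero ht0
      -- Q is an extension of kernel q by cokernel ≅ X₃
      have hker : IsSplitObj P (kernel q) := by
        refine ih (kernel q) (kernel.lift q (S.f ≫ p) (cokernel.condition _)) ?_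
        have hex : (ShortComplex.mk (S.f ≫ p) q (cokernel.condition _)).Exact :=
          ShortComplex.exact_of_g_is_cokernel _ (cokernelIsCokernel _)
        exact (ShortComplex.exact_iff_epi_kernel_lift _).mp hex
      refine .of_extension (ShortComplex.mk (kernel.ι q) q (kernel.condition q))
        (ShortComplex.ShortExact.mk ?_) hker (Simple.of_iso (asIso t).symm) (hquot t htepi hP)
      apply ShortComplex.exact_of_f_is_kernel
      exact kernelIsKernel q

end Aux

section Aux2

variable [CategoryTheory.Abelian B] {P : B → Prop}

/-- The cokernel of a maximal proper subobject inclusion is simple. -/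
theorem simple_cokernel_of_maximal {M X : B} (f : M ⟶ X) [Mono f] (hnot : ¬ IsIso f)
    (hmax : ∀ (N : B) (g : N ⟶ X) (h : M ⟶ N), Mono g → h ≫ g = f → IsIso g ∨ IsIso h) :
    Simple (cokernel f) := by
  have hcnz : ¬ IsZero (cokernel f) := by
    intro hz
    haveI : Epi f := CategoryTheory.Abelian.epi_of_cokernel_π_eq_zero _ (hz.eq_of_tgt _ _)
    exact hnot (isIso_of_mono_of_epi f)
  constructor
  intro W h hmono
  constructor
  · intro hiso h0
    apply hcnz
    have hW : IsZero W := by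
      rw [IsZero.iff_id_eq_zero]
      calc 𝟙 W = h ≫ inv h := (IsIso.hom_inv_id h).symm
        _ = 0 ≫ inv h := congrArg (· ≫ inv h) h0
        _ = 0 := zero_comp
    exact hW.of_iso (asIso h).symm
  · intro hne
    set π := cokernel.π f with hπ
    have hl : f ≫ π = (0 : M ⟶ W) ≫ h := by rw [hπ, cokernel.condition, zero_comp]
    set l : M ⟶ pullback π h := pullback.lift f 0 hl with hldef
    rcases hmax (pullback π h) (pullback.fst π h) l inferInstance (pullback.lift_fst _ _ _) with
      hiso | hiso
    · -- π factors through h, so h is epi, hence iso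
      have : π = inv (pullback.fst π h) ≫ pullback.snd π h ≫ h := by
        rw [← pullback.condition, IsIso.inv_hom_id_assoc]
      have hepi : Epi ((inv (pullback.fst π h) ≫ pullback.snd π h) ≫ h) := by
        rw [Category.assoc, ← this]; infer_instance
      have := epi_of_epi (inv (pullback.fst π h) ≫ pullback.snd π h) h
      exact isIso_of_mono_of_epi h
    · -- pullback is M itself; then snd is both zero and epi, so W is zero
      exfalso
      have hsnd0 : pullback.snd π h = 0 := by
        have heq : pullback.snd π h = inv l ≫ (l ≫ pullback.snd π h) := by
          rw [IsIso.inv_hom_id_assoc]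
        have h2 : l ≫ pullback.snd π h = 0 := pullback.lift_snd _ _ _
        rw [heq, h2, comp_zero]
      have : Epi (pullback.snd π h) := inferInstance
      have hW : IsZero W := by
        rw [IsZero.iff_id_eq_zero, ← cancel_epi (pullback.snd π h), hsnd0]; simp
      exact hne (hW.eq_of_src h 0)

theorem IsSplitObj.of_P
    (hsub : ∀ {X Y : B} (f : X ⟶ Y), Mono f → P Y → P X)
    (hquot : ∀ {X Y : B} (f : X ⟶ Y), Epi f → P X → P Y)
    (hfinlen : ∀ X : B, P X → IsArtinianObject X ∧ IsNoetherianObject X)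
    {Z : B} (hZ : P Z) : IsSplitObj P Z := by
  obtain ⟨hart, hnoe⟩ := hfinlen Z hZ
  have key : ∀ A : Subobject Z, IsSplitObj P ((A : B)) := by
    intro A
    induction A using (wellFounded_lt (α := Subobject Z)).induction with
    | _ A ih =>
    by_cases hA : A = ⊥
    · subst hA
      exact .of_isZero _ (IsZero.of_iso (isZero_zero B) Subobject.botCoeIsoZero)
    · obtain ⟨M, hMA, hmaxM⟩ := (wellFounded_gt (α := Subobject Z)).has_min
        {N : Subobject Z | N < A} ⟨⊥, lt_of_le_of_ne bot_le (Ne.symm hA)⟩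
      set j : (M : B) ⟶ (A : B) := Subobject.ofLE M A hMA.le with hj
      have hnotiso : ¬ IsIso j := by
        intro hiso
        refine absurd (le_antisymm hMA.le (Subobject.le_of_comm (inv j) ?_)) hMA.ne
        rw [← Subobject.ofLE_arrow (h := hMA.le), ← hj, IsIso.inv_hom_id_assoc]
      have hmaxobj : ∀ (N : B) (g : N ⟶ (A : B)) (h : (M : B) ⟶ N),
          Mono g → h ≫ g = j → IsIso g ∨ IsIso h := by
        intro N g h hg hcomm
        haveI := hg
        have hNle : Subobject.mk (g ≫ A.arrow) ≤ A := by
          conv_rhs => rw [← Subobject.mk_arrow A]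
          exact Subobject.mk_le_mk_of_comm g rfl
        have hMNs : M ≤ Subobject.mk (g ≫ A.arrow) := by
          refine Subobject.le_mk_of_comm h ?_
          rw [← Category.assoc, hcomm, hj, Subobject.ofLE_arrow]
        by_cases hcase : Subobject.mk (g ≫ A.arrow) < A
        · right
          have hMeq : M = Subobject.mk (g ≫ A.arrow) :=
            (hMNs.lt_or_eq).resolve_left (hmaxM _ hcase)
          set w : N ⟶ (M : B) := Subobject.ofMkLEMk (g ≫ A.arrow) M.arrow
            (by rw [Subobject.mk_arrow]; exact hMeq.ge) with hw
          have hwa : w ≫ M.arrow = g ≫ A.arrow := by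
            rw [hw, Subobject.ofMkLEMk_comp]
          have hwj : w ≫ j = g := by
            rw [← cancel_mono A.arrow, Category.assoc, hj, Subobject.ofLE_arrow, hwa]
          have h1 : h ≫ w = 𝟙 _ := by
            rw [← cancel_mono j, Category.assoc, hwj, hcomm, Category.id_comp]
          have h2 : w ≫ h = 𝟙 _ := by
            rw [← cancel_mono g, Category.assoc, hcomm, hwj, Category.id_comp]
          exact ⟨w, h1, h2⟩
        · left
          have hAeq : Subobject.mk (g ≫ A.arrow) = A := (hNle.lt_or_eq).resolve_left hcase
          set u : (A : B) ⟶ N := Subobject.ofLEMk A (g ≫ A.arrow) hAeq.ge with hu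
          have hua : u ≫ g ≫ A.arrow = A.arrow := by rw [hu, Subobject.ofLEMk_comp]
          have h1 : u ≫ g = 𝟙 _ := by
            rw [← cancel_mono A.arrow, Category.assoc, hua, Category.id_comp]
          have h2 : g ≫ u = 𝟙 _ := by
            rw [← cancel_mono g, Category.assoc, h1, Category.id_comp, Category.comp_id]
          exact ⟨u, h2, h1⟩
      have hsimp : Simple (cokernel j) := simple_cokernel_of_maximal j hnotiso hmaxobj
      have hPA : P (A : B) := hsub A.arrow inferInstance hZ
      have hPc : P (cokernel j) := hquot (cokernel.π j) inferInstance hPA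
      refine .of_extension (ShortComplex.mk j (cokernel.π j) (cokernel.condition j))
        (ShortComplex.ShortExact.mk ?_) (ih M hMA) hsimp hPc
      apply ShortComplex.exact_of_g_is_cokernel
      exact cokernelIsCokernel j
  exact (key ⊤).of_iso (asIso (⊤ : Subobject Z).arrow)

end Aux2

section Aux3

variable [CategoryTheory.Abelian B] {P : B → Prop}

/-- The splitting subcategory is closed under extensions whose quotient is split. -/
theorem IsSplitObj.of_shortExact {Z : B} (hZ : IsSplitObj P Z) :
    ∀ (S : CategoryTheory.ShortComplex B), S.ShortExact → IsSplitObj P S.X₁ →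
      (S.X₃ ≅ Z) → IsSplitObj P S.X₂ := by
  induction hZ with
  | of_isZero X h =>
    intro S hS h₁ e
    haveI := hS.mono_f
    haveI : IsIso S.f := hS.isIso_f_iff.mpr (h.of_iso e)
    exact h₁.of_iso (asIso S.f)
  | of_extension D hD hD₁ hD₃ hDP ih =>
    intro S hS h₁ e
    haveI := hS.mono_f
    haveI := hS.epi_g
    haveI := hD.mono_f
    haveI := hD.epi_g
    set b : S.X₂ ⟶ D.X₃ := S.g ≫ e.hom ≫ D.g with hb
    haveI hbepi : Epi b := by rw [hb]; infer_instance
    set ι : kernel b ⟶ S.X₂ := kernel.ι b with hι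
    have hιb : ι ≫ S.g ≫ e.hom ≫ D.g = 0 := kernel.condition b
    -- the map from the kernel to D.X₁
    set e' : kernel b ⟶ D.X₁ := hD.exact.lift (ι ≫ S.g ≫ e.hom)
      (by rw [Category.assoc, Category.assoc]; exact hιb) with he'def
    have he' : e' ≫ D.f = ι ≫ S.g ≫ e.hom := hD.exact.lift_f _ _
    -- the map from S.X₁ to the kernel
    have hfb : S.f ≫ b = 0 := by
      rw [hb, ← Category.assoc, S.zero, zero_comp]
    set f' : S.X₁ ⟶ kernel b := kernel.lift b S.f hfb with hf'def
    have hf' : f' ≫ ι = S.f := kernel.lift_ι _ _ _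
    haveI : Mono f' := by
      have : Mono (f' ≫ ι) := by rw [hf']; infer_instance
      exact mono_of_mono f' ι
    -- (ι, e') is a pullback square of (S.g ≫ e.hom, D.f), hence e' is epi
    have hcomm : ι ≫ (S.g ≫ e.hom) = e' ≫ D.f := by rw [he']
    have hpb : IsPullback ι e' (S.g ≫ e.hom) D.f := by
      apply IsPullback.of_isLimit (c := PullbackCone.mk ι e' hcomm)
      refine PullbackCone.IsLimit.mk hcomm ?_ ?_ ?_ ?_
      · intro s
        refine kernel.lift b (s.fst) ?_
        rw [hb]
        calc s.fst ≫ S.g ≫ e.hom ≫ D.g = (s.fst ≫ (S.g ≫ e.hom)) ≫ D.g := by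
              simp only [Category.assoc]
          _ = (s.snd ≫ D.f) ≫ D.g := by rw [s.condition]
          _ = 0 := by rw [Category.assoc, D.zero, comp_zero]
      · intro s
        exact kernel.lift_ι _ _ _
      · intro s
        rw [← cancel_mono D.f, Category.assoc, ← hcomm, ← Category.assoc,
          kernel.lift_ι]
        exact s.condition
      · intro s m hm₁ hm₂
        rw [← cancel_mono ι, kernel.lift_ι, hm₁]
    haveI : Epi (S.g ≫ e.hom) := epi_comp _ _
    haveI : Epi e' := by
      have h1 : hpb.isoPullback.hom ≫ pullback.snd (S.g ≫ e.hom) D.f = e' :=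
        hpb.isoPullback_hom_snd
      rw [← h1]
      haveI : Epi (pullback.snd (S.g ≫ e.hom) D.f) :=
        CategoryTheory.Abelian.epi_pullback_of_epi_f _ _
      exact epi_comp _ _
    -- f' is a kernel of e'
    have hw : f' ≫ e' = 0 := by
      rw [← cancel_mono D.f, Category.assoc, he', zero_comp, ← Category.assoc, hf',
        ← Category.assoc, S.zero, zero_comp]
    have hkl : IsLimit (KernelFork.ofι f' hw) := by
      refine KernelFork.IsLimit.ofι' f' hw ?_
      intro A k hk
      have hk2 : (k ≫ ι) ≫ S.g = 0 := by
        have h0 : ((k ≫ ι) ≫ S.g) ≫ e.hom = 0 := by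
          have h1 : ((k ≫ ι) ≫ S.g) ≫ e.hom = k ≫ (e' ≫ D.f) := by
            rw [he']; simp only [Category.assoc]
          rw [h1, ← Category.assoc, hk, zero_comp]
        calc (k ≫ ι) ≫ S.g = (((k ≫ ι) ≫ S.g) ≫ e.hom) ≫ e.inv := by simp
          _ = 0 := by rw [h0, zero_comp]
      refine ⟨hS.exact.lift (k ≫ ι) hk2, ?_⟩
      rw [← cancel_mono ι, Category.assoc, hf', hS.exact.lift_f]
    have hE : IsSplitObj P (kernel b) := by
      refine ih (ShortComplex.mk f' e' hw) (ShortComplex.ShortExact.mk ?_) h₁ (Iso.refl _)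
      exact ShortComplex.exact_of_f_is_kernel _ hkl
    refine .of_extension (ShortComplex.mk ι b (kernel.condition b))
      (ShortComplex.ShortExact.mk ?_) hE hD₃ hDP
    apply ShortComplex.exact_of_f_is_kernel
    exact kernelIsKernel b

end Aux3

section Aux4

variable [CategoryTheory.Abelian B] {P : B → Prop}

/-- Applying a right-exact endofunctor to a split object yields a split object,
provided images of `P`-objects are split and `P` is closed under quotients. -/
theorem IsSplitObj.map (F : B ⥤ B) [PreservesFiniteColimits F]
    (hquot : ∀ {X Y : B} (f : X ⟶ Y), Epi f → P X → P Y)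
    (hP1 : ∀ {X : B}, P X → IsSplitObj P (F.obj X))
    {X : B} (hX : IsSplitObj P X) : IsSplitObj P (F.obj X) := by
  induction hX with
  | of_isZero X h => exact .of_isZero _ (F.map_isZero h)
  | of_extension S hS h₁ h₃ hP ih =>
    haveI := hS.mono_f
    haveI := hS.epi_g
    haveI : Epi (F.map S.g) := preserves_epi_of_preservesColimit F S.g
    have hex : (S.map F).Exact :=
      hS.exact.map_of_epi_of_preservesCokernel F hS.epi_g inferInstance
    have hepi : Epi (kernel.lift (S.map F).g (S.map F).f (S.map F).zero) :=
      (ShortComplex.exact_iff_epi_kernel_lift _).mp hex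
    have hK : IsSplitObj P (kernel (F.map S.g)) :=
      IsSplitObj.of_epi hquot ih (kernel (F.map S.g))
        (kernel.lift (F.map S.g) (F.map S.f) (S.map F).zero) hepi
    have hq : IsSplitObj P (F.obj S.X₃) := hP1 hP
    refine hq.of_shortExact
      (ShortComplex.mk (kernel.ι (F.map S.g)) (F.map S.g) (kernel.condition _))
      (ShortComplex.ShortExact.mk ?_) hK (Iso.refl _)
    apply ShortComplex.exact_of_f_is_kernel
    exact kernelIsKernel _

end Aux4

/-- Let `B` be an abelian monoidal category whose tensor product is
right exact (preserves finite colimits) in each variable, and let `C` be a full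
subcategory (given by its class of objects `P`) closed under isomorphisms,
subobjects, quotient objects and binary tensor products, all of whose objects have
finite length (are both Artinian and Noetherian objects) in `B`.  If `X` and `Y`
belong to the splitting subcategory `B^split`, then so does `X ⊗ Y`; that is,
`B^split` is closed under tensor products and is a monoidal subcategory of `B`. -/
theorem IsSplitObj.tensor [CategoryTheory.Abelian B] [MonoidalCategory B]
    (hright : ∀ X : B, PreservesFiniteColimits (tensorLeft X))
    (hright' : ∀ X : B, PreservesFiniteColimits (tensorRight X))
    (P : B → Prop)
    (hiso : ∀ {X Y : B}, (X ≅ Y) → P X → P Y)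
    (hsub : ∀ {X Y : B} (f : X ⟶ Y), Mono f → P Y → P X)
    (hquot : ∀ {X Y : B} (f : X ⟶ Y), Epi f → P X → P Y)
    (htensor : ∀ {X Y : B}, P X → P Y → P (X ⊗ Y))
    (hfinlen : ∀ X : B, P X → IsArtinianObject X ∧ IsNoetherianObject X)
    (X Y : B) (hX : IsSplitObj P X) (hY : IsSplitObj P Y) :
    IsSplitObj P (X ⊗ Y) := by
  haveI := hright' Y
  refine IsSplitObj.map (tensorRight Y) hquot ?_ hX
  intro V hV
  haveI := hright V
  refine IsSplitObj.map (tensorLeft V) hquot ?_ hY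
  intro W hW
  exact IsSplitObj.of_P hsub hquot hfinlen (htensor hV hW)
end

section
/- Let A be a fix-point-free simple current extension in D. Then for every simple object X of D the free A-module A ⊗ X is a simple object of Mod_A: the only subobjects of A ⊗ X in the category Mod_A of A-module objects are 0 and A ⊗ X itself. -/
open CategoryTheory CategoryTheory.Limits MonoidalCategory

attribute [local instance] CategoryTheory.Abelian.hasFiniteBiproducts

universe v u

variable {D : Type u} [Category.{v} D] [MonoidalCategory D]

/-- The free `A`-module object on an object `X`, namely `A ⊗ X` with the action
induced by the multiplication of `A`. -/
def Mod_.free (A : Mon D) (X : D) : Mod D A.X where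
  X := A.X ⊗ X
  mod :=
  { smul := (α_ A.X A.X X).inv ≫ (MonObj.mul (X := A.X) ▷ X)
    one_smul := by
      change _ ▷ _ ≫ _ = (λ_ (A.X ⊗ X)).hom
      rw [associator_inv_naturality_left_assoc, ← comp_whiskerRight, MonObj.one_mul]
      monoidal
    mul_smul := by
      change MonObj.mul (X := A.X) ▷ (A.X ⊗ X) ≫ ((α_ A.X A.X X).inv ≫ (MonObj.mul (X := A.X) ▷ X)) =
        (α_ A.X A.X (A.X ⊗ X)).hom ≫ A.X ◁ ((α_ A.X A.X X).inv ≫ (MonObj.mul (X := A.X) ▷ X)) ≫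
          ((α_ A.X A.X X).inv ≫ (MonObj.mul (X := A.X) ▷ X))
      rw [associator_inv_naturality_left_assoc, ← comp_whiskerRight, MonObj.mul_assoc]
      simp only [comp_whiskerRight, MonoidalCategory.whiskerLeft_comp, Category.assoc]
      rw [associator_inv_naturality_middle_assoc]
      monoidal }

abbrev CategoryTheory.Mon.mul (A : Mon D) : A.X ⊗ A.X ⟶ A.X := MonObj.mul (X := A.X)

abbrev CategoryTheory.Mon.one (A : Mon D) : 𝟙_ D ⟶ A.X := MonObj.one (X := A.X)

abbrev CategoryTheory.Mod.act {A : Mon D} (N : Mod D A.X) : A.X ⊗ N.X ⟶ N.X :=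
  ModObj.smul (M := A.X) (X := N.X)

lemma CategoryTheory.Mod.one_act {A : Mon D} (N : Mod D A.X) :
    (A.one ▷ N.X) ≫ N.act = (λ_ N.X).hom :=
  ModObj.one_smul (M := A.X) N.X

lemma CategoryTheory.Mod.assoc {A : Mon D} (N : Mod D A.X) :
    (A.mul ▷ N.X) ≫ N.act = (α_ A.X A.X N.X).hom ≫ (A.X ◁ N.act) ≫ N.act :=
  ModObj.mul_smul (M := A.X) N.X

lemma CategoryTheory.Mod.Hom.act_hom {A : Mon D} {N M : Mod D A.X} (f : N ⟶ M) :
    N.act ≫ f.hom = (A.X ◁ f.hom) ≫ M.act :=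
  IsModHom.smul_hom

namespace FreeModuleSimpleAux

lemma whiskerLeft_zero' [Preadditive D] [∀ X : D, (tensorLeft X).Additive]
    (U : D) {V W : D} : U ◁ (0 : V ⟶ W) = 0 :=
  (tensorLeft U).map_zero V W

lemma whiskerRight_zero' [Preadditive D] [∀ X : D, (tensorRight X).Additive]
    {V W : D} (U : D) : (0 : V ⟶ W) ▷ U = 0 :=
  (tensorRight U).map_zero V W

section SimpleTensor

variable [Preadditive D] [∀ X : D, (tensorLeft X).Additive]

lemma simple_tensor_of_invertible {U U' : D} (h1 : U ⊗ U' ≅ 𝟙_ D) (h2 : U' ⊗ U ≅ 𝟙_ D)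
    (Z : D) [Simple Z] : Simple (U ⊗ Z) := by
  let ψ : ∀ V : D, U ⊗ (U' ⊗ V) ≅ V := fun V =>
    (α_ U U' V).symm ≪≫ whiskerRightIso h1 V ≪≫ λ_ V
  let χ : ∀ V : D, U' ⊗ (U ⊗ V) ≅ V := fun V =>
    (α_ U' U V).symm ≪≫ whiskerRightIso h2 V ≪≫ λ_ V
  have natψ : ∀ {V V' : D} (g : V ⟶ V'), (U ◁ (U' ◁ g)) ≫ (ψ V').hom = (ψ V).hom ≫ g := by
    intro V V' g
    simp only [ψ, Iso.trans_hom, Iso.symm_hom, whiskerRightIso_hom, Category.assoc]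
    rw [associator_inv_naturality_right_assoc, whisker_exchange_assoc,
      leftUnitor_naturality]
  have natχ : ∀ {V V' : D} (g : V ⟶ V'), (U' ◁ (U ◁ g)) ≫ (χ V').hom = (χ V).hom ≫ g := by
    intro V V' g
    simp only [χ, Iso.trans_hom, Iso.symm_hom, whiskerRightIso_hom, Category.assoc]
    rw [associator_inv_naturality_right_assoc, whisker_exchange_assoc,
      leftUnitor_naturality]
  refine ⟨fun {W} f hm => ⟨?_, ?_⟩⟩
  · intro hiso hf0
    subst hf0
    apply id_nonzero Z
    have h1' : 𝟙 (U ⊗ Z) = 0 := by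
      rw [← IsIso.inv_hom_id (0 : W ⟶ U ⊗ Z), comp_zero]
    calc 𝟙 Z = (χ Z).inv ≫ (U' ◁ 𝟙 (U ⊗ Z)) ≫ (χ Z).hom := by simp
      _ = 0 := by rw [h1', whiskerLeft_zero', zero_comp, comp_zero]
  · intro hne
    have hmono : Mono (U' ◁ f) := by
      constructor
      intro V a b hab
      have h3 : (U ◁ a) ≫ (ψ W).hom = (U ◁ b) ≫ (ψ W).hom := by
        have := congrArg (fun t => (U ◁ t) ≫ (ψ (U ⊗ Z)).hom) hab
        simp only [MonoidalCategory.whiskerLeft_comp, Category.assoc] at this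
        rw [natψ f, ← Category.assoc, ← Category.assoc] at this
        exact (cancel_mono f).mp this
      have h4 : U ◁ a = U ◁ b := by
        have := h3
        rwa [cancel_mono ((ψ W).hom)] at this
      calc a = (χ V).inv ≫ (U' ◁ (U ◁ a)) ≫ (χ (U' ⊗ W)).hom := by rw [natχ a]; simp
        _ = (χ V).inv ≫ (U' ◁ (U ◁ b)) ≫ (χ (U' ⊗ W)).hom := by rw [h4]
        _ = b := by rw [natχ b]; simp
    have hgne : (U' ◁ f) ≫ (χ Z).hom ≠ 0 := by
      intro h
      apply hne
      have h5 : U' ◁ f = 0 := by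
        have : ((U' ◁ f) ≫ (χ Z).hom) ≫ (χ Z).inv = 0 := by rw [h, zero_comp]
        simpa using this
      have h6 : (ψ W).hom ≫ f = 0 := by
        rw [← natψ f, h5, whiskerLeft_zero', zero_comp]
      have := congrArg (fun t => (ψ W).inv ≫ t) h6
      simpa using this
    haveI : Mono ((U' ◁ f) ≫ (χ Z).hom) := mono_comp _ _
    haveI hgi : IsIso ((U' ◁ f) ≫ (χ Z).hom) := isIso_of_mono_of_nonzero hgne
    haveI : IsIso (U' ◁ f) := by
      have : U' ◁ f = ((U' ◁ f) ≫ (χ Z).hom) ≫ (χ Z).inv := by simp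
      rw [this]; infer_instance
    haveI : IsIso (U ◁ (U' ◁ f)) := (whiskerLeftIso U (asIso (U' ◁ f))).isIso_hom
    have : f = (ψ W).inv ≫ (U ◁ (U' ◁ f)) ≫ (ψ (U ⊗ Z)).hom := by rw [natψ f]; simp
    rw [this]; infer_instance

end SimpleTensor

open Classical in
lemma exists_component_factor_aux [Abelian D] {J : Type} [Fintype J]
    (S : J → D) (hsimp : ∀ j, Simple (S j))
    (hhom : ∀ i j : J, i ≠ j → ∀ φ : S i ⟶ S j, φ = 0) :
    ∀ (n : ℕ) {N : D} (f : N ⟶ ⨁ S), Mono f → f ≠ 0 →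
      (Finset.univ.filter (fun k => f ≫ biproduct.π S k ≠ 0)).card ≤ n →
      ∃ (j : J) (u : S j ⟶ N), u ≫ f = biproduct.ι S j := by
  intro n
  induction n with
  | zero =>
    intro N f hm hf hcard
    exfalso
    apply hf
    apply biproduct.hom_ext
    intro k
    rw [zero_comp]
    by_contra hk
    have : k ∈ Finset.univ.filter (fun k => f ≫ biproduct.π S k ≠ 0) := by
      simp [hk]
    have := Finset.card_pos.mpr ⟨k, this⟩
    omega
  | succ n ih =>
    intro N f hm hf hcard
    haveI := hm
    have hex : ∃ j, f ≫ biproduct.π S j ≠ 0 := by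
      by_contra h
      push_neg at h
      exact hf (biproduct.hom_ext _ _ (fun k => by rw [h k, zero_comp]))
    obtain ⟨j, hj⟩ := hex
    set q : (⨁ S) ⟶ (⨁ S) := 𝟙 (⨁ S) - biproduct.π S j ≫ biproduct.ι S j with hq
    have hqπ : ∀ k, k ≠ j → q ≫ biproduct.π S k = biproduct.π S k := by
      intro k hk
      simp [hq, Preadditive.sub_comp, Category.assoc, biproduct.ι_π_ne S (Ne.symm hk)]
    have hqπj : q ≫ biproduct.π S j = 0 := by
      simp [hq, Preadditive.sub_comp, Category.assoc, biproduct.ι_π_self]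
    set κ : kernel (f ≫ q) ⟶ N := kernel.ι (f ≫ q) with hκdef
    set h : kernel (f ≫ q) ⟶ S j := κ ≫ f ≫ biproduct.π S j with hhdef
    have hcompk : ∀ k, k ≠ j → κ ≫ f ≫ biproduct.π S k = 0 := by
      intro k hk
      rw [← hqπ k hk]
      have : κ ≫ (f ≫ q) = 0 := kernel.condition _
      rw [← Category.assoc, ← Category.assoc, Category.assoc κ f q, this, zero_comp]
    have hfac : κ ≫ f = h ≫ biproduct.ι S j := by
      apply biproduct.hom_ext
      intro k
      by_cases hk : k = j
      · subst hk
        simp [hhdef]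
      · simp [biproduct.ι_π_ne S hk, biproduct.ι_π_ne S (Ne.symm hk), hcompk k hk]
    by_cases hh : h = 0
    · have hκ0 : κ = 0 := by
        have : κ ≫ f = 0 := by rw [hfac, hh, zero_comp]
        exact zero_of_comp_mono f this
      haveI hmq : Mono (f ≫ q) := Preadditive.mono_of_kernel_zero hκ0
      have hN : (𝟙 N : N ⟶ N) ≠ 0 := by
        intro h0
        apply hf
        rw [← Category.id_comp f, h0, zero_comp]
      have hfq : f ≫ q ≠ 0 := by
        intro h0
        apply hN
        apply zero_of_comp_mono (f ≫ q)
        rw [Category.id_comp, h0]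
      have hsub : (Finset.univ.filter (fun k => (f ≫ q) ≫ biproduct.π S k ≠ 0)) ⊆
          (Finset.univ.filter (fun k => f ≫ biproduct.π S k ≠ 0)).erase j := by
        intro k hk
        simp only [Finset.mem_filter, Finset.mem_univ, true_and] at hk
        by_cases hkj : k = j
        · subst hkj
          exfalso; apply hk
          rw [Category.assoc, hqπj, comp_zero]
        · rw [Finset.mem_erase]
          refine ⟨hkj, ?_⟩
          simp only [Finset.mem_filter, Finset.mem_univ, true_and]
          rw [Category.assoc, hqπ k hkj] at hk
          exact hk
      have hmem : j ∈ Finset.univ.filter (fun k => f ≫ biproduct.π S k ≠ 0) := by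
        simp [hj]
      have hcard' : (Finset.univ.filter (fun k => (f ≫ q) ≫ biproduct.π S k ≠ 0)).card ≤ n := by
        have h1 := Finset.card_le_card hsub
        have h2 := Finset.card_erase_of_mem hmem
        omega
      obtain ⟨j', u, hu⟩ := ih (f ≫ q) hmq hfq hcard'
      have hj' : j' ≠ j := by
        intro h0
        subst h0
        apply id_nonzero (S j')
        have := congrArg (fun t => t ≫ biproduct.π S j') hu
        simp only [Category.assoc, biproduct.ι_π_self] at this
        rw [hqπj, comp_zero, comp_zero] at this
        exact this.symm
      refine ⟨j', u, ?_⟩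
      apply biproduct.hom_ext
      intro k
      by_cases hk : k = j
      · subst hk
        rw [Category.assoc, biproduct.ι_π_ne S hj']
        exact hhom j' k hj' _
      · conv_lhs => rw [Category.assoc, ← hqπ k hk]
        rw [← Category.assoc f q, ← Category.assoc u (f ≫ q), hu]
    · haveI : Mono (κ ≫ f) := mono_comp _ _
      haveI hmh : Mono h := by
        have : Mono (h ≫ biproduct.ι S j) := by rw [← hfac]; infer_instance
        exact mono_of_mono h (biproduct.ι S j)
      haveI := hsimp j
      haveI : IsIso h := isIso_of_mono_of_nonzero hh
      refine ⟨j, inv h ≫ κ, ?_⟩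
      rw [Category.assoc, hfac, ← Category.assoc, IsIso.inv_hom_id, Category.id_comp]

section ModAux

variable {A : Mon D}

/-- The module morphism `free A W ⟶ N` induced by `a : W ⟶ N.X`. -/
def modHomOfHom {N : Mod D A.X} {W : D} (a : W ⟶ N.X) : Mod_.free A W ⟶ N :=
  Mod.Hom.mk' ((A.X ◁ a) ≫ N.act) (by
    change ((α_ A.X A.X W).inv ≫ (A.mul ▷ W)) ≫ (A.X ◁ a) ≫ N.act =
      (A.X ◁ ((A.X ◁ a) ≫ N.act)) ≫ N.act
    rw [Category.assoc, ← whisker_exchange_assoc, N.assoc, associator_naturality_right_assoc,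
      Iso.inv_hom_id_assoc, MonoidalCategory.whiskerLeft_comp]
    simp only [Category.assoc])

lemma mod_mono_hom {N M : Mod D A.X} (f : N ⟶ M) [Mono f] : Mono f.hom := by
  constructor
  intro W a b hab
  have key : ∀ c : W ⟶ N.X, (modHomOfHom c ≫ f).hom = (A.X ◁ (c ≫ f.hom)) ≫ M.act := by
    intro c
    simp only [Mod.comp_hom', modHomOfHom, Mod.Hom.mk'_hom, Category.assoc, f.act_hom,
      MonoidalCategory.whiskerLeft_comp]
    change ((A.X ◁ c) ≫ N.act) ≫ f.hom = _
    rw [Category.assoc, f.act_hom]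
  have h1 : modHomOfHom a ≫ f = modHomOfHom b ≫ f := by
    apply Mod_.hom_ext
    rw [key, key, hab]
  have h2 : modHomOfHom a = modHomOfHom b := (cancel_mono f).mp h1
  have h3 : (A.X ◁ a) ≫ N.act = (A.X ◁ b) ≫ N.act := congrArg Mod.Hom.hom h2
  have recover : ∀ c : W ⟶ N.X,
      (λ_ W).inv ≫ (A.one ▷ W) ≫ (A.X ◁ c) ≫ N.act = c := by
    intro c
    rw [← whisker_exchange_assoc, N.one_act]
    simp
  rw [← recover a, ← recover b, h3]

lemma mod_isIso {N M : Mod D A.X} (f : N ⟶ M) (hi : IsIso f.hom) : IsIso f := by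
  haveI := hi
  haveI : IsIso (A.X ◁ f.hom) := (whiskerLeftIso A.X (asIso f.hom)).isIso_hom
  have hact : M.act ≫ inv f.hom = (A.X ◁ inv f.hom) ≫ N.act := by
    have h2 : (A.X ◁ inv f.hom) ≫ N.act ≫ f.hom = M.act := by
      rw [f.act_hom, ← MonoidalCategory.whiskerLeft_comp_assoc, IsIso.inv_hom_id,
        MonoidalCategory.whiskerLeft_id, Category.id_comp]
    rw [← h2, Category.assoc, Category.assoc, IsIso.hom_inv_id, Category.comp_id]
  refine ⟨⟨Mod.Hom.mk' (inv f.hom) hact, ?_, ?_⟩⟩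
  · apply Mod_.hom_ext; simp
  · apply Mod_.hom_ext; simp

lemma mod_isZero [Preadditive D] [∀ X : D, (tensorLeft X).Additive]
    (N : Mod D A.X) (h : IsZero N.X) : IsZero N := by
  have act0 : ∀ P Q : Mod D A.X, P.act ≫ (0 : P.X ⟶ Q.X) = (A.X ◁ (0 : P.X ⟶ Q.X)) ≫ Q.act := by
    intro P Q
    rw [comp_zero, whiskerLeft_zero', zero_comp]
  constructor
  · intro M
    exact ⟨{ default := Mod.Hom.mk' 0 (act0 N M), uniq := fun g => Mod_.hom_ext _ _ (h.eq_of_src _ _) }⟩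
  · intro M
    exact ⟨{ default := Mod.Hom.mk' 0 (act0 M N), uniq := fun g => Mod_.hom_ext _ _ (h.eq_of_tgt _ _) }⟩

/-- The key computation: acting on a factorization through a component. -/
lemma key_computation {X : D} {N : Mod D A.X} (f : N ⟶ Mod_.free A X)
    {Ca Cj Ck : D} (p : Ca ⟶ A.X) (q : Cj ⟶ A.X) (u : Cj ⊗ X ⟶ N.X)
    (hu : u ≫ f.hom = q ▷ X) (w : A.X ⟶ Ck) :
    ((Ca ◁ u) ≫ (p ▷ N.X) ≫ N.act) ≫ f.hom ≫ (w ▷ X)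
      = (α_ Ca Cj X).inv ≫ (((p ⊗ₘ q) ≫ A.mul ≫ w) ▷ X) := by
  dsimp only [Mod_.free] at f hu ⊢
  have hact : N.act ≫ f.hom = (A.X ◁ f.hom) ≫ ((α_ A.X A.X X).inv ≫ (A.mul ▷ X)) := f.act_hom
  calc ((Ca ◁ u) ≫ (p ▷ N.X) ≫ N.act) ≫ f.hom ≫ (w ▷ X)
      = (Ca ◁ u) ≫ (p ▷ N.X) ≫ (N.act ≫ f.hom) ≫ (w ▷ X) := by
        simp only [Category.assoc]
    _ = (Ca ◁ u) ≫ (p ▷ N.X) ≫ (A.X ◁ f.hom) ≫ (α_ A.X A.X X).inv ≫ (A.mul ▷ X) ≫ (w ▷ X) := by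
        rw [hact]; simp only [Category.assoc]
    _ = (Ca ◁ u) ≫ (Ca ◁ f.hom) ≫ (p ▷ (A.X ⊗ X)) ≫ (α_ A.X A.X X).inv ≫
          (A.mul ▷ X) ≫ (w ▷ X) := by
        rw [← whisker_exchange_assoc]
    _ = (Ca ◁ (q ▷ X)) ≫ (p ▷ (A.X ⊗ X)) ≫ (α_ A.X A.X X).inv ≫ (A.mul ▷ X) ≫ (w ▷ X) := by
        rw [← MonoidalCategory.whiskerLeft_comp_assoc, hu]
    _ = (p ⊗ₘ (q ▷ X)) ≫ (α_ A.X A.X X).inv ≫ (A.mul ▷ X) ≫ (w ▷ X) := by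
        rw [← tensorHom_def'_assoc]
    _ = (p ⊗ₘ (q ⊗ₘ 𝟙 X)) ≫ (α_ A.X A.X X).inv ≫ (A.mul ▷ X) ≫ (w ▷ X) := by
        rw [MonoidalCategory.tensorHom_id]
    _ = (α_ Ca Cj X).inv ≫ ((p ⊗ₘ q) ⊗ₘ 𝟙 X) ≫ (A.mul ▷ X) ≫ (w ▷ X) := by
        rw [associator_inv_naturality_assoc]
    _ = (α_ Ca Cj X).inv ≫ (((p ⊗ₘ q) ≫ A.mul ≫ w) ▷ X) := by
        simp only [MonoidalCategory.tensorHom_id, MonoidalCategory.comp_whiskerRight,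
          Category.assoc]

end ModAux

/-- Tensoring a biproduct on the right distributes. -/
noncomputable def tensorBiproductIso [Abelian D] [∀ X : D, (tensorRight X).Additive]
    {I : Type} [Fintype I] (C : I → D) (X : D) :
    (⨁ C) ⊗ X ≅ ⨁ (fun i => C i ⊗ X) where
  hom := biproduct.lift fun k => (biproduct.π C k) ▷ X
  inv := biproduct.desc fun k => (biproduct.ι C k) ▷ X
  hom_inv_id := by
    rw [biproduct.lift_desc]
    calc ∑ k : I, (biproduct.π C k ▷ X) ≫ (biproduct.ι C k ▷ X)
        = ∑ k : I, (tensorRight X).map (biproduct.π C k ≫ biproduct.ι C k) := by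
          refine Finset.sum_congr rfl fun k _ => ?_
          rw [← MonoidalCategory.comp_whiskerRight]
          rfl
      _ = (tensorRight X).map (∑ k : I, biproduct.π C k ≫ biproduct.ι C k) :=
          ((tensorRight X).map_sum _ _).symm
      _ = 𝟙 ((⨁ C) ⊗ X) := by rw [biproduct.total]; exact (tensorRight X).map_id _
  inv_hom_id := by
    apply biproduct.hom_ext'
    intro j
    apply biproduct.hom_ext
    intro k
    rw [biproduct.ι_desc_assoc, Category.assoc, biproduct.lift_π, Category.comp_id,
      ← MonoidalCategory.comp_whiskerRight]
    by_cases hk : j = k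
    · subst hk
      rw [biproduct.ι_π_self, biproduct.ι_π_self]
      exact MonoidalCategory.id_whiskerRight _ _
    · rw [biproduct.ι_π_ne _ hk, biproduct.ι_π_ne _ hk]
      exact whiskerRight_zero' X

end FreeModuleSimpleAux

open FreeModuleSimpleAux

/-- Let `D` be an abelian braided monoidal category with tensor
product additive in each variable and simple unit object, and let
`A = ⊕_{i∈I} C_i` be a fix-point-free simple current extension in `D`
(a commutative monoid object whose underlying object is a finite biproduct of
invertible objects `C_i` indexed by a finite abelian group `I`, with `C_0 ≅ 1`,
all components `C_i ⊗ C_j → C_{i+j}` of the multiplication nonzero, and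
`C_i ⊗ X ≇ X` for every simple `X` and every `i ≠ 0`).  Then for every simple
object `X` of `D` the free `A`-module `A ⊗ X` is a simple object of `Mod_A`:
its only subobjects in `Mod_A` are `0` and `A ⊗ X` itself. -/
theorem free_module_simple_of_fixpoint_free_simple_current_extension
    [Abelian D] [BraidedCategory D]
    [∀ X : D, (tensorLeft X).Additive] [∀ X : D, (tensorRight X).Additive]
    [Simple (𝟙_ D)]
    {I : Type} [AddCommGroup I] [Fintype I]
    (A : Mon D)
    (hcomm : (β_ A.X A.X).hom ≫ MonObj.mul (X := A.X) = MonObj.mul (X := A.X))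
    (C : I → D) (e : A.X ≅ ⨁ C)
    (h0 : Nonempty (C 0 ≅ 𝟙_ D))
    (hinv : ∀ i : I, ∃ C' : D,
      Nonempty (C i ⊗ C' ≅ 𝟙_ D) ∧ Nonempty (C' ⊗ C i ≅ 𝟙_ D))
    (hmulne : ∀ i j : I,
      ((biproduct.ι C i ≫ e.inv) ⊗ₘ (biproduct.ι C j ≫ e.inv)) ≫ MonObj.mul (X := A.X) ≫ e.hom ≫
          biproduct.π C (i + j) ≠ 0)
    (hfpf : ∀ i : I, i ≠ 0 → ∀ X : D, Simple X → IsEmpty (C i ⊗ X ≅ X))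
    (X : D) [Simple X]
    (N : Mod D A.X) (f : N ⟶ Mod_.free A X) (hf : Mono f) :
    IsZero N ∨ IsIso f := by
  classical
  dsimp only [Mod_.free] at f hf ⊢
  haveI := hf
  haveI hfm : Mono f.hom := mod_mono_hom f
  -- simplicity of the pieces
  haveI hCsimp : ∀ k : I, Simple (C k) := by
    intro k
    obtain ⟨C', ⟨hc1⟩, ⟨hc2⟩⟩ := hinv k
    haveI := simple_tensor_of_invertible hc1 hc2 (𝟙_ D)
    exact Simple.of_iso (ρ_ (C k)).symm
  haveI hSsimp : ∀ k : I, Simple (C k ⊗ X) := by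
    intro k
    obtain ⟨C', ⟨hc1⟩, ⟨hc2⟩⟩ := hinv k
    exact simple_tensor_of_invertible hc1 hc2 X
  haveI hCCsimp : ∀ a b : I, Simple (C a ⊗ C b) := by
    intro a b
    obtain ⟨C', ⟨hc1⟩, ⟨hc2⟩⟩ := hinv a
    exact simple_tensor_of_invertible hc1 hc2 (C b)
  -- the components of the multiplication
  set m : ∀ _ _ _ : I, _ := fun a b k =>
    ((biproduct.ι C a ≫ e.inv) ⊗ₘ (biproduct.ι C b ≫ e.inv)) ≫ A.mul ≫ e.hom ≫
      biproduct.π C k with hm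
  have hiso : ∀ a b k : I, a + b = k → IsIso (m a b k) := by
    intro a b k hk
    subst hk
    exact isIso_of_hom_simple (hmulne a b)
  -- off-diagonal components of the multiplication vanish
  have hm0 : ∀ a b k : I, a + b ≠ k → m a b k = 0 := by
    intro a b k hk
    by_contra hne
    haveI := isIso_of_hom_simple hne
    haveI := hiso a b (a + b) rfl
    obtain ⟨C', ⟨hc1⟩, ⟨hc2⟩⟩ := hinv k
    haveI := hiso (a + b - k) k (a + b) (by abel)
    have i2 : C k ≅ C (a + b) := (asIso (m a b k)).symm ≪≫ asIso (m a b (a + b))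
    have i3 : C (a + b - k) ≅ 𝟙_ D :=
      (ρ_ _).symm ≪≫ whiskerLeftIso _ hc1.symm ≪≫ (α_ _ _ _).symm ≪≫
        whiskerRightIso (asIso (m (a + b - k) k (a + b)) ≪≫ i2.symm) C' ≪≫ hc1
    have i4 : C (a + b - k) ⊗ X ≅ X := whiskerRightIso i3 X ≪≫ λ_ X
    exact (hfpf (a + b - k) (sub_ne_zero_of_ne hk) X inferInstance).false i4
  -- no nonzero maps between distinct components
  have hzero : ∀ i j : I, i ≠ j → ∀ φ : C i ⊗ X ⟶ C j ⊗ X, φ = 0 := by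
    intro i j hij φ
    by_contra hne
    haveI := isIso_of_hom_simple hne
    haveI := hiso (-i) i 0 (neg_add_cancel i)
    haveI := hiso (-i) j (-i + j) rfl
    have isoX : C (-i + j) ⊗ X ≅ X :=
      whiskerRightIso (asIso (m (-i) j (-i + j))).symm X ≪≫ α_ _ _ _ ≪≫
        whiskerLeftIso (C (-i)) (asIso φ).symm ≪≫ (α_ _ _ _).symm ≪≫
        whiskerRightIso (asIso (m (-i) i 0) ≪≫ h0.some) X ≪≫ λ_ X
    have hne0 : (-i + j : I) ≠ 0 := by
      intro h
      exact hij (neg_add_eq_zero.mp h)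
    exact (hfpf (-i + j) hne0 X inferInstance).false isoX
  -- the decomposition of the free module
  set S : I → D := fun k => C k ⊗ X with hS
  haveI hSsimp' : ∀ k : I, Simple (S k) := hSsimp
  set e' : A.X ⊗ X ≅ ⨁ S := whiskerRightIso e X ≪≫ tensorBiproductIso C X with he'
  have he'π : ∀ k, e'.hom ≫ biproduct.π S k = (e.hom ≫ biproduct.π C k) ▷ X := by
    intro k
    simp only [he', Iso.trans_hom, whiskerRightIso_hom, Category.assoc, tensorBiproductIso,
      biproduct.lift_π, MonoidalCategory.comp_whiskerRight]
    exact congrArg (fun g => e.hom ▷ X ≫ g) (biproduct.lift_π (fun k => biproduct.π C k ▷ X) k)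
  have he'ι : ∀ k, biproduct.ι S k ≫ e'.inv = (biproduct.ι C k ≫ e.inv) ▷ X := by
    intro k
    simp only [he', Iso.trans_inv, whiskerRightIso_inv, tensorBiproductIso,
      biproduct.ι_desc_assoc, MonoidalCategory.comp_whiskerRight]
  set fh : N.X ⟶ ⨁ S := f.hom ≫ e'.hom with hfh
  haveI hfhm : Mono fh := mono_comp _ _
  by_cases hz : f.hom = 0
  · -- the submodule is zero
    left
    have : (𝟙 N.X : N.X ⟶ N.X) = 0 := by
      apply (cancel_mono f.hom).mp
      rw [hz, Category.id_comp, comp_zero]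
    exact mod_isZero N ((IsZero.iff_id_eq_zero N.X).mpr this)
  · -- the inclusion is an isomorphism
    right
    have hfh0 : fh ≠ 0 := by
      intro h
      apply hz
      have : fh ≫ e'.inv = 0 := by rw [h, zero_comp]
      rw [hfh, Category.assoc, Iso.hom_inv_id, Category.comp_id] at this
      exact this
    -- there is a component factoring through N
    obtain ⟨j, u, hu⟩ := exists_component_factor_aux S hSsimp' hzero
      (Finset.univ.filter (fun k => fh ≫ biproduct.π S k ≠ 0)).card fh hfhm hfh0 le_rfl
    -- propagate to all components using the module structure
    have hall : ∀ i : I, ∃ ui : S i ⟶ N.X, ui ≫ fh = biproduct.ι S i := by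
      intro i
      set a : I := i - j with ha
      have hufh : u ≫ f.hom = (biproduct.ι C j ≫ e.inv) ▷ X := by
        have h2 : u ≫ f.hom = biproduct.ι S j ≫ e'.inv := by
          rw [← hu, hfh]
          simp only [Category.assoc, Iso.hom_inv_id, Category.comp_id]
        rw [h2, he'ι]
      set t : C a ⊗ (C j ⊗ X) ⟶ N.X :=
        (C a ◁ u) ≫ ((biproduct.ι C a ≫ e.inv) ▷ N.X) ≫ N.act with ht
      have haj : a + j = i := by rw [ha]; abel
      have key : ∀ k, t ≫ fh ≫ biproduct.π S k = (α_ (C a) (C j) X).inv ≫ (m a j k ▷ X) := by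
        intro k
        have hkc := key_computation f (biproduct.ι C a ≫ e.inv) (biproduct.ι C j ≫ e.inv) u
          hufh (e.hom ≫ biproduct.π C k)
        calc t ≫ fh ≫ biproduct.π S k
            = t ≫ f.hom ≫ ((e.hom ≫ biproduct.π C k) ▷ X) := by
              rw [hfh, ← he'π k]
              simp only [Category.assoc]
          _ = (α_ (C a) (C j) X).inv ≫
                ((((biproduct.ι C a ≫ e.inv) ⊗ₘ (biproduct.ι C j ≫ e.inv)) ≫ A.mul ≫
                  e.hom ≫ biproduct.π C k) ▷ X) := by
              rw [ht]
              exact hkc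
          _ = (α_ (C a) (C j) X).inv ≫ (m a j k ▷ X) := by rw [hm]
      haveI : IsIso (m a j i) := hiso a j i haj
      haveI : IsIso (m a j i ▷ X) := (whiskerRightIso (asIso (m a j i)) X).isIso_hom
      set θ : C a ⊗ (C j ⊗ X) ⟶ C i ⊗ X := (α_ (C a) (C j) X).inv ≫ (m a j i ▷ X) with hθ
      haveI : IsIso θ := by rw [hθ]; infer_instance
      have hfac2 : t ≫ fh = θ ≫ biproduct.ι S i := by
        apply biproduct.hom_ext
        intro k
        by_cases hk : k = i
        · subst hk
          rw [Category.assoc, key k, Category.assoc, biproduct.ι_π_self, Category.comp_id, hθ]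
        · rw [Category.assoc, key k, Category.assoc, biproduct.ι_π_ne S (fun h => hk h.symm),
            comp_zero, hm0 a j k (show a + j ≠ k by rw [haj]; exact fun hh => hk hh.symm),
            whiskerRight_zero', comp_zero]
      refine ⟨inv θ ≫ t, ?_⟩
      rw [Category.assoc, hfac2, ← Category.assoc, IsIso.inv_hom_id, Category.id_comp]
    -- assemble a splitting of fh
    choose uu huu using hall
    set r : (⨁ S) ⟶ N.X := ∑ k : I, biproduct.π S k ≫ uu k with hr
    have hrf : r ≫ fh = 𝟙 (⨁ S) := by
      rw [hr, Preadditive.sum_comp]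
      calc ∑ k : I, (biproduct.π S k ≫ uu k) ≫ fh
          = ∑ k : I, biproduct.π S k ≫ biproduct.ι S k := by
            refine Finset.sum_congr rfl fun k _ => ?_
            rw [Category.assoc, huu k]
        _ = 𝟙 (⨁ S) := biproduct.total
    have hfr : fh ≫ r = 𝟙 N.X := by
      apply (cancel_mono fh).mp
      rw [Category.assoc, hrf, Category.comp_id, Category.id_comp]
    haveI : IsIso fh := ⟨⟨r, hfr, hrf⟩⟩
    have hfhom : IsIso f.hom := by
      have : f.hom = fh ≫ e'.inv := by rw [hfh, Category.assoc, Iso.hom_inv_id, Category.comp_id]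
      rw [this]; infer_instance
    exact mod_isIso f hfhom
end

section
/- Let S₁, …, S_n be pairwise non-isomorphic simple objects of A and let X = S₁ ⊕ ⋯ ⊕ S_n be their biproduct. Then every subobject of X equals, as a subobject of X, the canonical subobject ⊕_{i∈J} S_i for some subset J ⊆ {1, …, n}; in particular, every nonzero subobject of X contains one of the canonical simple summands S_i. -/
open CategoryTheory CategoryTheory.Limits

attribute [local instance] CategoryTheory.Abelian.hasFiniteBiproducts

lemma myIsoOfEmpty {A : Type*} [Category A] [Abelian A] {ι : Type} [Fintype ι] [IsEmpty ι]
    (S : ι → A) (P : A) (f : P ⟶ ⨁ S) [Mono f] : IsIso f := by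
  have hX : IsZero (⨁ S) := by
    rw [IsZero.iff_id_eq_zero]
    exact biproduct.hom_ext _ _ (fun j => isEmptyElim j)
  have hP : IsZero P := by
    rw [IsZero.iff_id_eq_zero, ← cancel_mono f]
    exact hX.eq_of_tgt _ _
  exact ⟨0, hP.eq_of_src _ _, hX.eq_of_src _ _⟩

lemma myMainAux {A : Type*} [Category A] [Abelian A] (N : ℕ) :
    ∀ (ι : Type) [Fintype ι], Fintype.card ι ≤ N →
    ∀ (S : ι → A) [∀ i, Simple (S i)],
    (∀ i j : ι, i ≠ j → IsEmpty (S i ≅ S j)) →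
    ∀ (P : A) (f : P ⟶ ⨁ S) [Mono f],
    (∀ i, Epi (f ≫ biproduct.π S i)) → IsIso f := by
  induction N with
  | zero =>
    intro ι _ hcard S _ _ P f _ _
    haveI : IsEmpty ι := Fintype.card_eq_zero_iff.mp (Nat.le_zero.mp hcard)
    exact myIsoOfEmpty S P f
  | succ N ih =>
    intro ι _ hcard S _ hpair P f _ hepi
    classical
    rcases isEmpty_or_nonempty ι with hι | ⟨⟨i₀⟩⟩
    · exact myIsoOfEmpty S P f
    · set p : P ⟶ S i₀ := f ≫ biproduct.π S i₀ with hpdef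
      haveI : Epi p := hepi i₀
      set k : kernel p ⟶ P := kernel.ι p with hkdef
      haveI : ∀ j : {i : ι // i ≠ i₀}, Simple (Subtype.restrict (· ≠ i₀) S j) := fun j =>
        inferInstanceAs (Simple (S j.1))
      set h' : kernel p ⟶ ⨁ Subtype.restrict (· ≠ i₀) S := k ≫ f ≫ biproduct.toSubtype S (· ≠ i₀) with hh'
      have hfact : h' ≫ biproduct.fromSubtype S (· ≠ i₀) = k ≫ f := by
        apply biproduct.hom_ext
        intro j
        by_cases hj : j = i₀
        · subst hj
          have h0 : k ≫ f ≫ biproduct.π S j = 0 := by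
            rw [← hpdef, hkdef, kernel.condition]
          simp [hh', biproduct.fromSubtype_π, h0]
        · simp [hh', biproduct.fromSubtype_π, hj, biproduct.toSubtype_π]
      haveI : Mono (h' ≫ biproduct.fromSubtype S (· ≠ i₀)) := by
        rw [hfact]; infer_instance
      haveI : Mono h' := mono_of_mono h' (biproduct.fromSubtype S (· ≠ i₀))
      have hcomp : ∀ j : {i : ι // i ≠ i₀},
          h' ≫ biproduct.π (Subtype.restrict (· ≠ i₀) S) j = k ≫ f ≫ biproduct.π S j.1 := by
        intro j
        simp only [hh', Category.assoc, biproduct.toSubtype_π]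
        rfl
      have hepi' : ∀ j : {i : ι // i ≠ i₀}, Epi (h' ≫ biproduct.π (Subtype.restrict (· ≠ i₀) S) j) := by
        intro j
        have hne : h' ≫ biproduct.π (Subtype.restrict (· ≠ i₀) S) j ≠ 0 := by
          intro h0
          rw [hcomp j] at h0
          have h0' : kernel.ι p ≫ (f ≫ biproduct.π S j.1) = 0 := by
            rw [← hkdef]; exact h0
          set w : S i₀ ⟶ S j.1 := Abelian.epiDesc p (f ≫ biproduct.π S j.1) h0' with hw
          have hpw : p ≫ w = f ≫ biproduct.π S j.1 := Abelian.comp_epiDesc _ _ _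
          haveI : Epi (f ≫ biproduct.π S j.1) := hepi j.1
          haveI : Epi (p ≫ w) := by rw [hpw]; infer_instance
          haveI : Epi w := epi_of_epi p w
          have hwne : w ≠ 0 := by
            intro hw0
            have : f ≫ biproduct.π S j.1 = 0 := by rw [← hpw, hw0, comp_zero]
            haveI : Epi (0 : P ⟶ S j.1) := by rw [← this]; infer_instance
            exact (Simple.not_isZero (S j.1)) (IsZero.of_epi_zero P (S j.1))
          haveI : IsIso w := isIso_of_epi_of_nonzero hwne
          exact (hpair i₀ j.1 (Ne.symm j.2)).false (asIso w)
        exact epi_of_nonzero_to_simple hne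
      have hpair' : ∀ a b : {i : ι // i ≠ i₀}, a ≠ b → IsEmpty (Subtype.restrict (· ≠ i₀) S a ≅ Subtype.restrict (· ≠ i₀) S b) :=
        fun a b hab => hpair a.1 b.1 (fun h => hab (Subtype.ext h))
      have hcard' : Fintype.card {i : ι // i ≠ i₀} ≤ N := by
        have h5 := Fintype.card_subtype_lt (p := fun i => i ≠ i₀) (x := i₀) (by simp)
        exact Nat.lt_succ_iff.mp (lt_of_lt_of_le h5 hcard)
      haveI : IsIso h' := ih _ hcard' _ hpair' _ h' hepi'
      have hfrom : inv h' ≫ (k ≫ f) = biproduct.fromSubtype S (· ≠ i₀) := by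
        rw [← hfact, IsIso.inv_hom_id_assoc]
      haveI : Epi f := by
        apply Preadditive.epi_of_cancel_zero
        intro C c hc
        have hfromc : biproduct.fromSubtype S (· ≠ i₀) ≫ c = 0 := by
          rw [← hfrom, Category.assoc, Category.assoc, hc, comp_zero, comp_zero]
        have hc' : c = biproduct.π S i₀ ≫ (biproduct.ι S i₀ ≫ c) := by
          apply biproduct.hom_ext'
          intro j
          by_cases hj : j = i₀
          · subst hj; simp
          · have h1 : biproduct.ι S j ≫ c = 0 := by
              erw [← biproduct.ι_fromSubtype S (· ≠ i₀) ⟨j, hj⟩, Category.assoc, hfromc,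
                comp_zero]
            rw [h1, ← Category.assoc, biproduct.ι_π_ne S hj, zero_comp]
        have h2 : p ≫ (biproduct.ι S i₀ ≫ c) = 0 := by
          rw [hpdef, Category.assoc, ← hc', hc]
        have h3 : biproduct.ι S i₀ ≫ c = 0 := by
          rw [← cancel_epi p, h2, comp_zero]
        rw [hc', h3, comp_zero]
      exact isIso_of_mono_of_epi f

/-- Let `S₁, …, S_n` be pairwise non-isomorphic simple objects of an
abelian category `A` and let `X = S₁ ⊕ ⋯ ⊕ S_n` be their biproduct.  Then every
subobject of `X` (presented by a monomorphism `f : P ⟶ X`) equals, as a subobject of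
`X`, the canonical subobject `⊕_{i∈J} S_i` for some subset `J ⊆ {1, …, n}`
(i.e. there is an isomorphism `g` from `⨁_{i ∈ J} S_i` to `P` with
`g.hom ≫ f = biproduct.fromSubtype`); in particular, every nonzero subobject of `X`
contains one of the canonical simple summands `S_i`. -/
theorem subobject_of_biproduct_of_pairwise_nonisomorphic_simples
    {A : Type*} [Category A] [Abelian A]
    (n : ℕ) (S : Fin n → A) [∀ i, Simple (S i)]
    (hpair : ∀ i j : Fin n, i ≠ j → IsEmpty (S i ≅ S j))
    (P : A) (f : P ⟶ ⨁ S) [Mono f] :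
    (∃ (J : Set (Fin n)) (g : (⨁ Subtype.restrict (· ∈ J) S) ≅ P),
        g.hom ≫ f = biproduct.fromSubtype S (· ∈ J)) ∧
      (¬ IsZero P → ∃ (i : Fin n) (h : S i ⟶ P), h ≫ f = biproduct.ι S i) := by
  classical
  set J : Set (Fin n) := {i | f ≫ biproduct.π S i ≠ 0} with hJ
  haveI : ∀ j : {i : Fin n // i ∈ J}, Simple (Subtype.restrict (· ∈ J) S j) := fun j =>
    inferInstanceAs (Simple (S j.1))
  set ψ : P ⟶ ⨁ Subtype.restrict (· ∈ J) S := f ≫ biproduct.toSubtype S (· ∈ J) with hψ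
  have hψfrom : ψ ≫ biproduct.fromSubtype S (· ∈ J) = f := by
    apply biproduct.hom_ext
    intro j
    by_cases hj : j ∈ J
    · simp [hψ, biproduct.fromSubtype_π, hj, biproduct.toSubtype_π]
    · have h0 : f ≫ biproduct.π S j = 0 := not_not.mp hj
      simp [hψ, biproduct.fromSubtype_π, hj, h0]
  haveI : Mono (ψ ≫ biproduct.fromSubtype S (· ∈ J)) := by rw [hψfrom]; infer_instance
  haveI : Mono ψ := mono_of_mono ψ (biproduct.fromSubtype S (· ∈ J))
  have hepi : ∀ j : {i : Fin n // i ∈ J},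
      Epi (ψ ≫ biproduct.π (Subtype.restrict (· ∈ J) S) j) := by
    intro j
    have h1 : ψ ≫ biproduct.π (Subtype.restrict (· ∈ J) S) j = f ≫ biproduct.π S j.1 := by
      simp only [hψ, Category.assoc, biproduct.toSubtype_π]
      rfl
    rw [h1]
    exact epi_of_nonzero_to_simple (f := f ≫ biproduct.π S j.1) j.2
  have hpair' : ∀ a b : {i : Fin n // i ∈ J}, a ≠ b →
      IsEmpty (Subtype.restrict (· ∈ J) S a ≅ Subtype.restrict (· ∈ J) S b) :=
    fun a b hab => hpair a.1 b.1 (fun h => hab (Subtype.ext h))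
  haveI : IsIso ψ := myMainAux (Fintype.card {i : Fin n // i ∈ J}) _ le_rfl _ hpair' P ψ hepi
  have hinv : inv ψ ≫ f = biproduct.fromSubtype S (· ∈ J) := by
    rw [← hψfrom, IsIso.inv_hom_id_assoc]
  constructor
  · exact ⟨J, (asIso ψ).symm, hinv⟩
  · intro hP
    have hex : ∃ i : Fin n, f ≫ biproduct.π S i ≠ 0 := by
      by_contra hall
      push_neg at hall
      have hf0 : f = 0 := biproduct.hom_ext _ _ (by simpa using hall)
      apply hP
      rw [IsZero.iff_id_eq_zero, ← cancel_mono f]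
      simp [hf0]
    obtain ⟨i, hi⟩ := hex
    refine ⟨i, biproduct.ι (Subtype.restrict (· ∈ J) S) ⟨i, hi⟩ ≫ inv ψ, ?_⟩
    exact (Category.assoc _ _ _).trans ((congrArg _ hinv).trans (biproduct.ι_fromSubtype _ _ _))
end

section
/- Let σ : I × I → ℂˣ be a bicharacter with σ(i, i) = 1 for all i ∈ I. Then there exists a 2-cocycle ε : I × I → ℂˣ such that ε(i, j)·ε(j, i)⁻¹ = σ(i, j) for all i, j ∈ I. -/
section aux
variable {I : Type*} [AddCommGroup I]

private lemma bichar_alt' {D : Type*} [CommGroup D] (σ : I → I → D)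
    (h1 : ∀ i j l : I, σ (i + j) l = σ i l * σ j l)
    (h2 : ∀ i j l : I, σ i (j + l) = σ i j * σ i l)
    (hd : ∀ i : I, σ i i = 1) (x y : I) : σ x y * σ y x = 1 := by
  have h := hd (x + y)
  rw [h1, h2, h2, hd, hd, one_mul, mul_one] at h
  exact h

private lemma fg_aux {D : Type*} [CommGroup D] (σ : I → I → D)
    (h1 : ∀ i j l : I, σ (i + j) l = σ i l * σ j l)
    (h2 : ∀ i j l : I, σ i (j + l) = σ i j * σ i l)
    (hd : ∀ i : I, σ i i = 1) (s : Finset I) :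
    ∃ f : I → I → D,
      ∀ x ∈ AddSubgroup.closure (s : Set I), ∀ y ∈ AddSubgroup.closure (s : Set I),
        (∀ z ∈ AddSubgroup.closure (s : Set I),
            f (x + y) z = f x z * f y z ∧ f x (y + z) = f x y * f x z) ∧
        f x y * (f y x)⁻¹ = σ x y := by
  classical
  set ι := {a : I // a ∈ s} with hι
  letI : LinearOrder ι := LinearOrder.lift' (fun k => (Fintype.equivFin ι k : Fin _))
    (Fintype.equivFin ι).injective
  set S2 : I →+ I →+ Additive D :=
    AddMonoidHom.mk' (fun i => AddMonoidHom.mk'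
        (fun j => Additive.ofMul (σ i j)) (fun j l => congrArg Additive.ofMul (h2 i j l)))
      (fun i i' => AddMonoidHom.ext fun j => congrArg Additive.ofMul (h1 i i' j)) with hS2
  have S2apply : ∀ x y : I, S2 x y = Additive.ofMul (σ x y) := fun x y => rfl
  set π : (ι → ℤ) →ₗ[ℤ] I :=
    { toFun := fun v => ∑ k : ι, v k • (k : I)
      map_add' := by intro v w; simp [add_smul, Finset.sum_add_distrib]
      map_smul' := by intro a v; simp [Finset.smul_sum, mul_smul] } with hπ
  have hπs : ∀ x (hx : x ∈ s), π (Pi.single (⟨x, hx⟩ : ι) 1) = x := by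
    intro x hx
    show ∑ k : ι, Pi.single (⟨x, hx⟩ : ι) 1 k • (k : I) = x
    rw [Fintype.sum_eq_single (⟨x, hx⟩ : ι)]
    · simp
    · intro b hb
      rw [Pi.single_eq_of_ne hb, zero_smul]
  have hrange : ∀ x ∈ AddSubgroup.closure (s : Set I), ∃ v, π v = x := by
    have hle : AddSubgroup.closure (s : Set I) ≤ (LinearMap.range π).toAddSubgroup := by
      rw [AddSubgroup.closure_le]
      intro x hx
      exact ⟨Pi.single (⟨x, Finset.mem_coe.mp hx⟩ : ι) 1, hπs x (Finset.mem_coe.mp hx)⟩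
    intro x hx
    exact hle hx
  obtain ⟨n, snf⟩ := (LinearMap.ker π).smithNormalForm (Pi.basisFun ℤ ι)
  set c : (ι → ℤ) → ι → ℤ := fun v k => snf.bM.repr v k with hc
  set τ : ι → ι → Additive D := fun k l => S2 (π (snf.bM k)) (π (snf.bM l)) with hτ
  have hcadd : ∀ v w k, c (v + w) k = c v k + c w k := by
    intro v w k
    simp [hc, map_add]
  set e : (ι → ℤ) →+ (ι → ℤ) →+ Additive D :=
    AddMonoidHom.mk' (fun v => AddMonoidHom.mk'
      (fun w => ∑ k : ι, ∑ l : ι, if l < k then (c v k * c w l) • τ k l else 0)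
      (by
        intro w w'
        rw [← Finset.sum_add_distrib]
        refine Finset.sum_congr rfl fun k _ => ?_
        rw [← Finset.sum_add_distrib]
        refine Finset.sum_congr rfl fun l _ => ?_
        split_ifs with h
        · rw [hcadd, mul_add, add_smul]
        · rw [add_zero]))
      (by
        intro v v'
        refine AddMonoidHom.ext fun w => ?_
        show _ = (∑ k : ι, ∑ l : ι, if l < k then (c v k * c w l) • τ k l else 0)
          + ∑ k : ι, ∑ l : ι, if l < k then (c v' k * c w l) • τ k l else 0
        rw [← Finset.sum_add_distrib]
        refine Finset.sum_congr rfl fun k _ => ?_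
        rw [← Finset.sum_add_distrib]
        refine Finset.sum_congr rfl fun l _ => ?_
        split_ifs with h
        · rw [hcadd, add_mul, add_smul]
        · rw [add_zero]) with he
  have heapply : ∀ v w, e v w = ∑ k : ι, ∑ l : ι, if l < k then (c v k * c w l) • τ k l else 0 :=
    fun v w => rfl
  -- key kernel lemma
  have hkey : ∀ v (hv : v ∈ LinearMap.ker π), ∀ k : ι, (c v k) • π (snf.bM k) = 0 := by
    intro v hv k
    by_cases hk : k ∈ Set.range snf.f
    · obtain ⟨j, rfl⟩ := hk
      have hco : c v (snf.f j) = snf.a j * snf.bN.repr ⟨v, hv⟩ j := by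
        have h := snf.repr_apply_embedding_eq_repr_smul (m := ⟨v, hv⟩) (i := j)
        rw [map_smul, Finsupp.smul_apply, smul_eq_mul] at h
        exact h
      have h0 : π ((snf.bN j : ι → ℤ)) = 0 := (snf.bN j).2
      rw [hco, mul_comm, mul_smul, ← map_smul π, ← snf.snf j, h0, smul_zero]
    · have h0 : c v k = 0 := snf.repr_eq_zero_of_notMem_range (m := ⟨v, hv⟩) hk
      rw [h0, zero_smul]
  have hker1 : ∀ v, v ∈ LinearMap.ker π → ∀ w, e v w = 0 := by
    intro v hv w
    rw [heapply]
    refine Finset.sum_eq_zero fun k _ => Finset.sum_eq_zero fun l _ => ?_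
    split_ifs with h
    · rw [hτ, mul_comm, mul_smul, ← AddMonoidHom.smul_apply, ← map_zsmul S2, hkey v hv k,
        map_zero, AddMonoidHom.zero_apply, smul_zero]
    · rfl
  have hker2 : ∀ w v, v ∈ LinearMap.ker π → e w v = 0 := by
    intro w v hv
    rw [heapply]
    refine Finset.sum_eq_zero fun k _ => Finset.sum_eq_zero fun l _ => ?_
    split_ifs with h
    · rw [hτ, mul_smul, ← map_zsmul (S2 (π (snf.bM k))), hkey v hv l, map_zero, smul_zero]
    · rfl
  -- representation of vectors in the basis
  have hrep : ∀ v : ι → ℤ, ∑ k : ι, c v k • snf.bM k = v := by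
    intro v
    have h := snf.bM.sum_equivFun v
    simpa [Module.Basis.equivFun_apply] using h
  have hsumapply : ∀ (F : ι → (I →+ Additive D)) (y : I),
      (∑ k : ι, F k) y = ∑ k : ι, F k y := by
    intro F y
    exact map_sum (AddMonoidHom.eval y) F Finset.univ
  have hsigma : ∀ v w, S2 (π v) (π w) = ∑ k : ι, ∑ l : ι, (c v k * c w l) • τ k l := by
    intro v w
    conv_lhs => rw [← hrep v, ← hrep w]
    rw [map_sum π, map_sum π]
    simp only [map_smul]
    rw [map_sum S2, hsumapply]
    refine Finset.sum_congr rfl fun k _ => ?_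
    rw [map_zsmul S2, AddMonoidHom.smul_apply, map_sum, Finset.smul_sum]
    refine Finset.sum_congr rfl fun l _ => ?_
    rw [map_zsmul, smul_smul, hτ]
  have htauswap : ∀ k l : ι, τ l k = - τ k l := by
    intro k l
    have halt := bichar_alt' σ h1 h2 hd (π (snf.bM l)) (π (snf.bM k))
    have h0 : τ l k + τ k l = 0 := by
      show Additive.ofMul (σ (π (snf.bM l)) (π (snf.bM k)))
        + Additive.ofMul (σ (π (snf.bM k)) (π (snf.bM l))) = 0
      rw [← ofMul_mul, halt, ofMul_one]
    exact eq_neg_of_add_eq_zero_left h0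
  have hdiag0 : ∀ k : ι, τ k k = 0 := by
    intro k
    show Additive.ofMul (σ (π (snf.bM k)) (π (snf.bM k))) = 0
    rw [hd, ofMul_one]
  have hswap : ∀ v w, (∑ k : ι, ∑ l : ι, if k < l then (c v k * c w l) • τ k l else 0)
      = - e w v := by
    intro v w
    rw [Finset.sum_comm]
    have hstep : ∀ K L : ι, (if L < K then (c v L * c w K) • τ L K else 0)
        = -(if L < K then (c w K * c v L) • τ K L else 0) := by
      intro K L
      split_ifs with h
      · rw [htauswap, smul_neg, mul_comm]
      · rw [neg_zero]
    calc (∑ K : ι, ∑ L : ι, if L < K then (c v L * c w K) • τ L K else 0)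
        = ∑ K : ι, ∑ L : ι, -(if L < K then (c w K * c v L) • τ K L else 0) :=
          Finset.sum_congr rfl fun K _ => Finset.sum_congr rfl fun L _ => hstep K L
      _ = - e w v := by
          rw [heapply]
          simp [Finset.sum_neg_distrib]
  have hratio : ∀ v w, S2 (π v) (π w) = e v w - e w v := by
    intro v w
    rw [hsigma]
    have step : ∀ k l : ι, (c v k * c w l) • τ k l =
        (if l < k then (c v k * c w l) • τ k l else 0) +
        (if k < l then (c v k * c w l) • τ k l else 0) := by
      intro k l
      rcases lt_trichotomy l k with h|h|h
      · rw [if_pos h, if_neg (asymm h), add_zero]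
      · subst h
        rw [if_neg (lt_irrefl _), hdiag0, smul_zero, add_zero]
      · rw [if_neg (asymm h), if_pos h, zero_add]
    calc (∑ k : ι, ∑ l : ι, (c v k * c w l) • τ k l)
        = (∑ k : ι, ∑ l : ι, if l < k then (c v k * c w l) • τ k l else 0)
          + ∑ k : ι, ∑ l : ι, if k < l then (c v k * c w l) • τ k l else 0 := by
          rw [← Finset.sum_add_distrib]
          refine Finset.sum_congr rfl fun k _ => ?_
          rw [← Finset.sum_add_distrib]
          exact Finset.sum_congr rfl fun l _ => step k l
      _ = e v w - e w v := by rw [hswap, ← heapply, sub_eq_add_neg]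
  -- well-definedness
  have hwd1 : ∀ v v' w, π v = π v' → e v w = e v' w := by
    intro v v' w hpi
    have hk : v - v' ∈ LinearMap.ker π := by
      rw [LinearMap.mem_ker, map_sub, hpi, sub_self]
    have h := hker1 _ hk w
    rw [map_sub, AddMonoidHom.sub_apply] at h
    exact sub_eq_zero.mp h
  have hwd2 : ∀ v w w', π w = π w' → e v w = e v w' := by
    intro v w w' hpi
    have hk : w - w' ∈ LinearMap.ker π := by
      rw [LinearMap.mem_ker, map_sub, hpi, sub_self]
    have h := hker2 v _ hk
    rw [map_sub] at h
    exact sub_eq_zero.mp h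
  -- the section and final function
  set ρ : I → (ι → ℤ) := fun x => Function.invFun (⇑π) x with hρdef
  have hρ : ∀ x ∈ AddSubgroup.closure (s : Set I), π (ρ x) = x := by
    intro x hx
    exact Function.invFun_eq (hrange x hx)
  refine ⟨fun x y => Additive.toMul (e (ρ x) (ρ y)), ?_⟩
  intro x hx y hy
  refine ⟨?_, ?_⟩
  · intro z hz
    constructor
    · show Additive.toMul (e (ρ (x + y)) (ρ z))
        = Additive.toMul (e (ρ x) (ρ z)) * Additive.toMul (e (ρ y) (ρ z))
      have hxy : x + y ∈ AddSubgroup.closure (s : Set I) := add_mem hx hy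
      have h : e (ρ (x + y)) (ρ z) = e (ρ x + ρ y) (ρ z) := by
        refine hwd1 _ _ _ ?_
        rw [hρ _ hxy, map_add, hρ _ hx, hρ _ hy]
      rw [h, map_add, AddMonoidHom.add_apply, toMul_add]
    · show Additive.toMul (e (ρ x) (ρ (y + z)))
        = Additive.toMul (e (ρ x) (ρ y)) * Additive.toMul (e (ρ x) (ρ z))
      have hyz : y + z ∈ AddSubgroup.closure (s : Set I) := add_mem hy hz
      have h : e (ρ x) (ρ (y + z)) = e (ρ x) (ρ y + ρ z) := by
        refine hwd2 _ _ _ ?_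
        rw [hρ _ hyz, map_add, hρ _ hy, hρ _ hz]
      rw [h, map_add, toMul_add]
  · show Additive.toMul (e (ρ x) (ρ y)) * (Additive.toMul (e (ρ y) (ρ x)))⁻¹ = σ x y
    have h := hratio (ρ x) (ρ y)
    rw [hρ _ hx, hρ _ hy, S2apply] at h
    have h' := congrArg Additive.toMul h
    rw [toMul_ofMul, toMul_sub, div_eq_mul_inv] at h'
    exact h'.symm


end aux


/-- Let `I` be an additively written abelian group and
`σ : I × I → ℂˣ` a bicharacter (multiplicative in each variable) satisfying
`σ(i, i) = 1` for all `i`.  Then there exists a 2-cocycle `ε : I → I → ℂˣ`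
(i.e. `ε(j, l)·ε(i, j+l) = ε(i, j)·ε(i+j, l)` for all `i, j, l`) such that
`ε(i, j)·ε(j, i)⁻¹ = σ(i, j)` for all `i, j ∈ I`. -/
theorem exists_two_cocycle_of_bicharacter_diagonal_one
    {I : Type*} [AddCommGroup I] (σ : I → I → ℂˣ)
    (hσ₁ : ∀ i j l : I, σ (i + j) l = σ i l * σ j l)
    (hσ₂ : ∀ i j l : I, σ i (j + l) = σ i j * σ i l)
    (hσdiag : ∀ i : I, σ i i = 1) :
    ∃ ε : I → I → ℂˣ,
      (∀ i j l : I, ε j l * ε i (j + l) = ε i j * ε (i + j) l) ∧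
      (∀ i j : I, ε i j * (ε j i)⁻¹ = σ i j) := by
  classical
  have hσalt : ∀ i j : I, σ i j * σ j i = 1 := bichar_alt' σ hσ₁ hσ₂ hσdiag
  have habs : ∀ i j : I, ‖(σ i j : ℂ)‖ ≠ 0 :=
    fun i j => norm_ne_zero_iff.mpr (σ i j).ne_zero
  -- the unitary part of `σ`, as a `Circle`-valued bicharacter
  set u : I → I → Circle := fun i j =>
    { val := (σ i j : ℂ) / (‖(σ i j : ℂ)‖ : ℂ)
      property := mem_sphere_zero_iff_norm.2 (by
        rw [norm_div, Complex.norm_of_nonneg (norm_nonneg _), div_self (habs i j)]) } with hu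
  have hucoe : ∀ i j : I, (u i j : ℂ) = (σ i j : ℂ) / (‖(σ i j : ℂ)‖ : ℂ) :=
    fun i j => rfl
  have hcoe1 : ∀ i j l : I, ((σ (i + j) l : ℂ)) = (σ i l : ℂ) * (σ j l : ℂ) := by
    intro i j l
    rw [← Units.val_mul, hσ₁]
  have hcoe2 : ∀ i j l : I, ((σ i (j + l) : ℂ)) = (σ i j : ℂ) * (σ i l : ℂ) := by
    intro i j l
    rw [← Units.val_mul, hσ₂]
  have hu1 : ∀ i j l : I, u (i + j) l = u i l * u j l := by
    intro i j l
    apply Circle.ext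
    rw [Circle.coe_mul, hucoe, hucoe, hucoe, hcoe1, norm_mul, Complex.ofReal_mul,
      div_mul_div_comm]
  have hu2 : ∀ i j l : I, u i (j + l) = u i j * u i l := by
    intro i j l
    apply Circle.ext
    rw [Circle.coe_mul, hucoe, hucoe, hucoe, hcoe2, norm_mul, Complex.ofReal_mul,
      div_mul_div_comm]
  have hud : ∀ i : I, u i i = 1 := by
    intro i
    apply Circle.ext
    rw [hucoe, hσdiag]
    simp
  -- Step 1: by compactness of `Circle`, find a globally bimultiplicative `g`
  -- with `g i j / g j i = u i j`, using the finitely generated case `fg_aux`.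
  obtain ⟨g, hgbi, hgrat⟩ :
      ∃ g : I → I → Circle,
        (∀ i j l : I, g (i + j) l = g i l * g j l ∧ g i (j + l) = g i j * g i l) ∧
        (∀ i j : I, g i j * (g j i)⁻¹ = u i j) := by
    set T : Finset I → Set (I → I → Circle) := fun s =>
      ⋂ (x : I) (_ : x ∈ AddSubgroup.closure (s : Set I)) (y : I)
        (_ : y ∈ AddSubgroup.closure (s : Set I)),
        ((⋂ (z : I) (_ : z ∈ AddSubgroup.closure (s : Set I)),
            ({g : I → I → Circle | g (x + y) z = g x z * g y z} ∩
             {g : I → I → Circle | g x (y + z) = g x y * g x z})) ∩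
         {g : I → I → Circle | g x y * (g y x)⁻¹ = u x y}) with hT
    have hTmem : ∀ (s : Finset I) (g : I → I → Circle), g ∈ T s ↔
        ∀ x ∈ AddSubgroup.closure (s : Set I), ∀ y ∈ AddSubgroup.closure (s : Set I),
          (∀ z ∈ AddSubgroup.closure (s : Set I),
              g (x + y) z = g x z * g y z ∧ g x (y + z) = g x y * g x z) ∧
          g x y * (g y x)⁻¹ = u x y := by
      intro s g
      simp only [hT, Set.mem_iInter, Set.mem_inter_iff, Set.mem_setOf_eq]
    have happ : ∀ a b : I, Continuous (fun g : I → I → Circle => g a b) :=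
      fun a b => (continuous_apply b).comp (continuous_apply a)
    have hTclosed : ∀ s, IsClosed (T s) := by
      intro s
      rw [hT]
      refine isClosed_iInter fun x => isClosed_iInter fun _ => isClosed_iInter fun y =>
        isClosed_iInter fun _ => IsClosed.inter ?_ ?_
      · refine isClosed_iInter fun z => isClosed_iInter fun _ => IsClosed.inter ?_ ?_
        · exact isClosed_eq (happ _ _) ((happ _ _).mul (happ _ _))
        · exact isClosed_eq (happ _ _) ((happ _ _).mul (happ _ _))
      · exact isClosed_eq ((happ _ _).mul (happ _ _).inv) continuous_const
    have hTne : ∀ s, (T s).Nonempty := by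
      intro s
      obtain ⟨f, hf⟩ := fg_aux u hu1 hu2 hud s
      exact ⟨f, (hTmem s f).2 hf⟩
    have hTmono : ∀ a b : Finset I, a ⊆ b → T b ⊆ T a := by
      intro a b hab g hg
      have hcl : AddSubgroup.closure ((a : Finset I) : Set I)
          ≤ AddSubgroup.closure ((b : Finset I) : Set I) :=
        AddSubgroup.closure_mono (by exact_mod_cast hab)
      rw [hTmem] at hg ⊢
      intro x hx y hy
      exact ⟨fun z hz => (hg x (hcl hx) y (hcl hy)).1 z (hcl hz), (hg x (hcl hx) y (hcl hy)).2⟩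
    have hTdir : Directed (· ⊇ ·) T := fun a b =>
      ⟨a ∪ b, hTmono a _ Finset.subset_union_left, hTmono b _ Finset.subset_union_right⟩
    obtain ⟨g, hg⟩ := IsCompact.nonempty_iInter_of_directed_nonempty_isCompact_isClosed T hTdir
      hTne (fun s => (hTclosed s).isCompact) hTclosed
    refine ⟨g, ?_, ?_⟩
    · intro i j l
      have hmem := (hTmem {i, j, l} g).1 (Set.mem_iInter.mp hg ({i, j, l} : Finset I))
      have hi : i ∈ AddSubgroup.closure (({i, j, l} : Finset I) : Set I) :=
        AddSubgroup.subset_closure (by simp)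
      have hj : j ∈ AddSubgroup.closure (({i, j, l} : Finset I) : Set I) :=
        AddSubgroup.subset_closure (by simp)
      have hl : l ∈ AddSubgroup.closure (({i, j, l} : Finset I) : Set I) :=
        AddSubgroup.subset_closure (by simp)
      exact (hmem i hi j hj).1 l hl
    · intro i j
      have hmem := (hTmem {i, j} g).1 (Set.mem_iInter.mp hg ({i, j} : Finset I))
      have hi : i ∈ AddSubgroup.closure (({i, j} : Finset I) : Set I) :=
        AddSubgroup.subset_closure (by simp)
      have hj : j ∈ AddSubgroup.closure (({i, j} : Finset I) : Set I) :=
        AddSubgroup.subset_closure (by simp)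
      exact (hmem i hi j hj).2
  have hg1 : ∀ i j l : I, g (i + j) l = g i l * g j l := fun i j l => (hgbi i j l).1
  have hg2 : ∀ i j l : I, g i (j + l) = g i j * g i l := fun i j l => (hgbi i j l).2
  have hg3 : ∀ i j : I, ((g i j * (g j i)⁻¹ : Circle) : ℂ)
      = (σ i j : ℂ) / (‖(σ i j : ℂ)‖ : ℂ) := by
    intro i j
    rw [hgrat i j, hucoe]
  -- Step 2: include the positive real part of `σ` via a real square root,
  -- and assemble the final bimultiplicative map `ε`
  set L : I → I → ℝ := fun i j => Real.log (‖(σ i j : ℂ)‖) with hL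
  set r : I → I → ℝ := fun i j => Real.exp (L i j / 2) with hr
  have hrne : ∀ i j, ((r i j : ℝ) : ℂ) ≠ 0 := fun i j =>
    Complex.ofReal_ne_zero.2 (Real.exp_ne_zero _)
  set ε : I → I → ℂˣ := fun i j =>
    Units.mk0 ((r i j : ℝ) : ℂ) (hrne i j) * Circle.toUnits (g i j) with hε
  have hεval : ∀ i j : I, (ε i j : ℂ) = ((r i j : ℝ) : ℂ) * (g i j : ℂ) := fun i j => rfl
  have hL1 : ∀ i j l : I, L (i + j) l = L i l + L j l := by
    intro i j l
    show Real.log (‖(σ (i + j) l : ℂ)‖) = _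
    rw [hcoe1, norm_mul, Real.log_mul (habs i l) (habs j l)]
  have hL2 : ∀ i j l : I, L i (j + l) = L i j + L i l := by
    intro i j l
    show Real.log (‖(σ i (j + l) : ℂ)‖) = _
    rw [hcoe2, norm_mul, Real.log_mul (habs i j) (habs i l)]
  have hLswap : ∀ i j : I, L j i = - L i j := by
    intro i j
    have hmul : ‖(σ i j : ℂ)‖ * ‖(σ j i : ℂ)‖ = 1 := by
      rw [← norm_mul, ← Units.val_mul, hσalt, Units.val_one, norm_one]
    have hlog := Real.log_mul (habs i j) (habs j i)
    rw [hmul, Real.log_one] at hlog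
    show Real.log (‖(σ j i : ℂ)‖) = - Real.log (‖(σ i j : ℂ)‖)
    linarith
  have hr1 : ∀ i j l : I, ((r (i + j) l : ℝ) : ℂ) = ((r i l : ℝ) : ℂ) * ((r j l : ℝ) : ℂ) := by
    intro i j l
    rw [← Complex.ofReal_mul]
    congr 1
    show Real.exp (L (i + j) l / 2) = Real.exp (L i l / 2) * Real.exp (L j l / 2)
    rw [hL1, add_div, Real.exp_add]
  have hr2 : ∀ i j l : I, ((r i (j + l) : ℝ) : ℂ) = ((r i j : ℝ) : ℂ) * ((r i l : ℝ) : ℂ) := by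
    intro i j l
    rw [← Complex.ofReal_mul]
    congr 1
    show Real.exp (L i (j + l) / 2) = Real.exp (L i j / 2) * Real.exp (L i l / 2)
    rw [hL2, add_div, Real.exp_add]
  have hε1 : ∀ i j l : I, ε (i + j) l = ε i l * ε j l := by
    intro i j l
    apply Units.ext
    simp only [Units.val_mul, hεval]
    rw [hr1, hg1 i j l, Circle.coe_mul]
    ring
  have hε2 : ∀ i j l : I, ε i (j + l) = ε i j * ε i l := by
    intro i j l
    apply Units.ext
    simp only [Units.val_mul, hεval]
    rw [hr2, hg2 i j l, Circle.coe_mul]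
    ring
  refine ⟨ε, ?_, ?_⟩
  · intro i j l
    rw [hε2 i j l, hε1 i j l, mul_left_comm, mul_comm (ε j l) (ε i l)]
  · intro i j
    apply Units.ext
    simp only [Units.val_mul, Units.val_inv_eq_inv_val, hεval]
    have hgr : (g i j : ℂ) * ((g j i : ℂ))⁻¹ = (σ i j : ℂ) / (‖(σ i j : ℂ)‖ : ℂ) := by
      have h := hg3 i j
      rwa [Circle.coe_mul, Circle.coe_inv] at h
    have hrr : ((r i j : ℝ) : ℂ) * (((r j i : ℝ) : ℂ))⁻¹ = (‖(σ i j : ℂ)‖ : ℂ) := by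
      rw [← Complex.ofReal_inv, ← Complex.ofReal_mul]
      congr 1
      show Real.exp (L i j / 2) * (Real.exp (L j i / 2))⁻¹ = ‖(σ i j : ℂ)‖
      rw [hLswap i j, neg_div, Real.exp_neg, inv_inv, ← Real.exp_add, add_halves]
      exact Real.exp_log (lt_of_le_of_ne (norm_nonneg _) (Ne.symm (habs i j)))
    calc ((r i j : ℝ) : ℂ) * (g i j : ℂ) * (((r j i : ℝ) : ℂ) * (g j i : ℂ))⁻¹
        = (((r i j : ℝ) : ℂ) * (((r j i : ℝ) : ℂ))⁻¹) * ((g i j : ℂ) * ((g j i : ℂ))⁻¹) := by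
          rw [mul_inv]
          ring
      _ = (‖(σ i j : ℂ)‖ : ℂ) * ((σ i j : ℂ) / (‖(σ i j : ℂ)‖ : ℂ)) := by
          rw [hgr, hrr]
      _ = (σ i j : ℂ) := by
          rw [mul_div_cancel₀]
          exact Complex.ofReal_ne_zero.2 (habs i j)
end
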